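/- The interpolation product is commutative and associative on languages: L ↑_C L' = L' ↑_C L and (L ↑_C L') ↑_C L'' = L ↑_C (L' ↑_C L'') for any subalphabet C. -/

import Mathlib

open List

variable {A : Type*}

/-- Extract the subword of `x` at positions `K`. -/
def extractW (x : List A) (K : Finset (Fin x.length)) : List A :=
  ((List.finRange x.length).filter (fun i => i ∈ K)).map x.get

/-- `InterpW C u v x` : `x` is a shuffle of `u` and `v` with possible sharing of letters in `C`. -/
def InterpW (C : Set A) (u v x : List A) : Prop :=
  ∃ K K' : Finset (Fin x.length), K ∪ K' = Finset.univ ∧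
    extractW x K = u ∧ extractW x K' = v ∧ ∀ a ∈ extractW x (K ∩ K'), a ∈ C

/-- Interpolation product of languages. -/
def interpL (C : Set A) (L L' : Set (List A)) : Set (List A) :=
  {x | ∃ u ∈ L, ∃ v ∈ L', InterpW C u v x}

/-- Shuffle product of languages. -/
def shuffleL (L L' : Set (List A)) : Set (List A) := interpL ∅ L L'

/-- Simon's congruence: same scattered subwords of length at most `k`. -/
def SimK (k : ℕ) (u v : List A) : Prop :=
  ∀ w : List A, w.length ≤ k → (w.Sublist u ↔ w.Sublist v)

/-- Piecewise-testability: union of `∼ₖ`-classes for some `k`. -/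
def PT (L : Set (List A)) : Prop :=
  ∃ k, ∀ u v : List A, SimK k u v → (u ∈ L ↔ v ∈ L)

/-- A DFA is acyclic when every cycle is a self-loop. -/
def DFA.Acyclic {σ : Type*} (M : DFA A σ) : Prop :=
  ∀ p q (u v : List A), M.evalFrom p u = q → M.evalFrom q v = p → p = q

/-- A language is ℛ-trivial iff it is recognized by a finite acyclic DFA. -/
def RTrivial (L : Set (List A)) : Prop :=
  ∃ (σ : Type) (_ : Fintype σ) (M : DFA A σ), M.Acyclic ∧ ∀ x, x ∈ M.accepts ↔ x ∈ L

section Aux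

def pre {n : ℕ} (S : Finset (Fin (n+1))) : Finset (Fin n) :=
  Finset.univ.filter (fun i => i.succ ∈ S)

lemma mem_pre {n : ℕ} {S : Finset (Fin (n+1))} {i : Fin n} : i ∈ pre S ↔ i.succ ∈ S := by
  simp [pre]

lemma pre_inter {n : ℕ} (S T : Finset (Fin (n+1))) : pre (S ∩ T) = pre S ∩ pre T := by
  ext i; simp [mem_pre]

lemma pre_union_univ {n : ℕ} {S T : Finset (Fin (n+1))} (h : S ∪ T = Finset.univ) :
    pre S ∪ pre T = Finset.univ := by
  ext i; simp only [Finset.mem_union, mem_pre, Finset.mem_univ, iff_true]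
  have : i.succ ∈ S ∪ T := h ▸ Finset.mem_univ _
  simpa using this

lemma extractW_cons (c : A) (x : List A) (S : Finset (Fin (x.length + 1))) :
    extractW (c :: x) S =
      (if (0 : Fin (x.length+1)) ∈ S then [c] else []) ++ extractW x (pre S) := by
  unfold extractW
  rw [show List.finRange (c::x).length = (0 : Fin (x.length+1)) ::
    (List.finRange x.length).map Fin.succ from List.finRange_succ]
  simp [List.filter_cons, List.filter_map, Function.comp, mem_pre, apply_ite]
  split <;> simp [Function.comp_def]

lemma extractW_nil (K : Finset (Fin (List.length ([] : List A)))) :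
    extractW ([] : List A) K = [] := by
  simp [extractW, List.finRange]

def succEmb' (n : ℕ) : Fin n ↪ Fin (n+1) := ⟨Fin.succ, Fin.succ_injective n⟩

lemma pre_map {n : ℕ} (K : Finset (Fin n)) : pre (K.map (succEmb' n)) = K := by
  ext i; simp [mem_pre, succEmb', Fin.succ_injective]

lemma pre_insert_map {n : ℕ} (K : Finset (Fin n)) : pre (insert 0 (K.map (succEmb' n))) = K := by
  ext i; simp [mem_pre, succEmb', Fin.succ_ne_zero, Fin.succ_injective]

def lift0 {n : ℕ} (b : Bool) (K : Finset (Fin n)) : Finset (Fin (n+1)) :=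
  if b then insert 0 (K.map (succEmb' n)) else K.map (succEmb' n)

lemma zero_mem_lift0 {n : ℕ} {b : Bool} {K : Finset (Fin n)} :
    (0 : Fin (n+1)) ∈ lift0 b K ↔ b := by
  cases b <;> simp [lift0, succEmb', Fin.succ_ne_zero, eq_comm]

lemma pre_lift0 {n : ℕ} (b : Bool) (K : Finset (Fin n)) : pre (lift0 b K) = K := by
  cases b <;> simp [lift0, pre_map, pre_insert_map]

lemma lift0_inter {n : ℕ} (b b' : Bool) (K K' : Finset (Fin n)) :
    lift0 b K ∩ lift0 b' K' = lift0 (b && b') (K ∩ K') := by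
  ext j
  refine Fin.cases ?_ ?_ j
  · simp only [Finset.mem_inter, zero_mem_lift0]
    cases b <;> cases b' <;> simp
  · intro i
    have : ∀ (c : Bool) (S : Finset (Fin n)), i.succ ∈ lift0 c S ↔ i ∈ S := by
      intro c S
      rw [← mem_pre, pre_lift0]
    simp [this, Finset.mem_inter]

lemma lift0_union_univ {n : ℕ} {b b' : Bool} {K K' : Finset (Fin n)}
    (hb : b || b') (h : K ∪ K' = Finset.univ) :
    lift0 b K ∪ lift0 b' K' = Finset.univ := by
  ext j
  simp only [Finset.mem_univ, iff_true]
  refine Fin.cases ?_ ?_ j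
  · rw [Finset.mem_union, zero_mem_lift0, zero_mem_lift0]
    exact Bool.or_eq_true _ _ ▸ hb
  · intro i
    have hm : ∀ (c : Bool) (S : Finset (Fin n)), i.succ ∈ lift0 c S ↔ i ∈ S := by
      intro c S; rw [← mem_pre, pre_lift0]
    rw [Finset.mem_union, hm, hm, ← Finset.mem_union, h]
    exact Finset.mem_univ _

lemma interpW_step (C : Set A) (c : A) {u v x : List A} (b b' : Bool) (hbb : b || b')
    (hC2 : b = true → b' = true → c ∈ C) (h : InterpW C u v x) :
    InterpW C (if b then c::u else u) (if b' then c::v else v) (c::x) := by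
  obtain ⟨K, K', hcov, hu, hv, hC⟩ := h
  simp only [InterpW, List.length_cons]
  refine ⟨lift0 b K, lift0 b' K', lift0_union_univ hbb hcov, ?_, ?_, ?_⟩
  · rw [extractW_cons, pre_lift0, hu]
    cases b <;> simp [zero_mem_lift0]
  · rw [extractW_cons, pre_lift0, hv]
    cases b' <;> simp [zero_mem_lift0]
  · intro a ha
    rw [lift0_inter, extractW_cons, pre_lift0] at ha
    by_cases hbb' : (b && b') = true
    · rw [if_pos (zero_mem_lift0.2 hbb')] at ha
      rcases List.mem_cons.1 (by simpa using ha) with rfl | ha'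
      · exact hC2 (by simp_all) (by simp_all)
      · exact hC _ ha'
    · rw [if_neg (fun h => hbb' (zero_mem_lift0.1 h))] at ha
      exact hC _ (by simpa using ha)

/-- Inductive characterization of the interpolation relation. -/
inductive IJ (C : Set A) : List A → List A → List A → Prop
  | nil : IJ C [] [] []
  | left (a : A) {u v x : List A} : IJ C u v x → IJ C (a::u) v (a::x)
  | right (a : A) {u v x : List A} : IJ C u v x → IJ C u (a::v) (a::x)
  | both (a : A) {u v x : List A} : a ∈ C → IJ C u v x → IJ C (a::u) (a::v) (a::x)

lemma IJ_to_InterpW {C : Set A} {u v x : List A} (h : IJ C u v x) : InterpW C u v x := by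
  induction h with
  | nil =>
    refine ⟨∅, ∅, ?_, extractW_nil _, extractW_nil _, ?_⟩
    · simp
    · intro a ha; rw [extractW_nil] at ha; cases ha
  | left a h ih => simpa using interpW_step _ a true false (by simp) (by simp) ih
  | right a h ih => simpa using interpW_step _ a false true (by simp) (by simp) ih
  | both a haC h ih => simpa using interpW_step _ a true true (by simp) (fun _ _ => haC) ih

lemma InterpW_to_IJ {C : Set A} : ∀ {x u v : List A}, InterpW C u v x → IJ C u v x := by
  intro x
  induction x with
  | nil =>
    intro u v ⟨K, K', _, hu, hv, _⟩
    rw [extractW_nil] at hu hv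
    subst hu; subst hv; exact IJ.nil
  | cons c x ih =>
    intro u v ⟨K, K', hcov, hu, hv, hC⟩
    rw [extractW_cons] at hu hv
    have hcov' : pre K ∪ pre K' = Finset.univ := pre_union_univ hcov
    have hCt : ∀ a ∈ extractW x (pre K ∩ pre K'), a ∈ C := by
      intro a ha
      apply hC
      rw [extractW_cons, pre_inter]
      exact List.mem_append_right _ ha
    by_cases h0 : (0 : Fin (x.length+1)) ∈ K <;>
      by_cases h0' : (0 : Fin (x.length+1)) ∈ K'
    · rw [if_pos h0] at hu; rw [if_pos h0'] at hv
      subst hu; subst hv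
      refine IJ.both c ?_ (ih ⟨_, _, hcov', rfl, rfl, hCt⟩)
      apply hC
      rw [extractW_cons, if_pos (Finset.mem_inter.2 ⟨h0, h0'⟩)]
      exact List.mem_cons_self
    · rw [if_pos h0] at hu; rw [if_neg h0'] at hv
      subst hu; subst hv
      exact IJ.left c (ih ⟨_, _, hcov', rfl, rfl, hCt⟩)
    · rw [if_neg h0] at hu; rw [if_pos h0'] at hv
      subst hu; subst hv
      exact IJ.right c (ih ⟨_, _, hcov', rfl, rfl, hCt⟩)
    · exfalso
      have : (0 : Fin (x.length+1)) ∈ K ∪ K' := hcov ▸ Finset.mem_univ _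
      rcases Finset.mem_union.1 this with h | h
      exacts [h0 h, h0' h]

lemma IJ_comm {C : Set A} {u v x : List A} (h : IJ C u v x) : IJ C v u x := by
  induction h with
  | nil => exact IJ.nil
  | left a _ ih => exact IJ.right a ih
  | right a _ ih => exact IJ.left a ih
  | both a haC _ ih => exact IJ.both a haC ih

lemma IJ_assoc_fwd {C : Set A} : ∀ {x u a b w : List A},
    IJ C a b u → IJ C u w x → ∃ v, IJ C b w v ∧ IJ C a v x := by
  intro x u a b w hab hux
  induction hux generalizing a b with
  | nil => cases hab; exact ⟨[], IJ.nil, IJ.nil⟩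
  | left c h ih =>
    cases hab with
    | left _ hab' =>
      obtain ⟨v, hv1, hv2⟩ := ih hab'
      exact ⟨v, hv1, IJ.left c hv2⟩
    | right _ hab' =>
      obtain ⟨v, hv1, hv2⟩ := ih hab'
      exact ⟨c::v, IJ.left c hv1, IJ.right c hv2⟩
    | both _ hcC hab' =>
      obtain ⟨v, hv1, hv2⟩ := ih hab'
      exact ⟨c::v, IJ.left c hv1, IJ.both c hcC hv2⟩
  | right c h ih =>
    obtain ⟨v, hv1, hv2⟩ := ih hab
    exact ⟨c::v, IJ.right c hv1, IJ.right c hv2⟩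
  | both c hcC h ih =>
    cases hab with
    | left _ hab' =>
      obtain ⟨v, hv1, hv2⟩ := ih hab'
      exact ⟨c::v, IJ.right c hv1, IJ.both c hcC hv2⟩
    | right _ hab' =>
      obtain ⟨v, hv1, hv2⟩ := ih hab'
      exact ⟨c::v, IJ.both c hcC hv1, IJ.right c hv2⟩
    | both _ _ hab' =>
      obtain ⟨v, hv1, hv2⟩ := ih hab'
      exact ⟨c::v, IJ.both c hcC hv1, IJ.both c hcC hv2⟩

end Aux

theorem stmt4 {A : Type*} (C : Set A) :
    (∀ L L' : Set (List A), interpL C L L' = interpL C L' L) ∧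
    (∀ L L' L'' : Set (List A),
      interpL C (interpL C L L') L'' = interpL C L (interpL C L' L'')) := by
  constructor
  · intro L L'
    ext x
    simp only [interpL, Set.mem_setOf_eq]
    constructor <;> rintro ⟨u, hu, v, hv, h⟩ <;>
      exact ⟨v, hv, u, hu, IJ_to_InterpW (IJ_comm (InterpW_to_IJ h))⟩
  · intro L L' L''
    ext x
    simp only [interpL, Set.mem_setOf_eq]
    constructor
    · rintro ⟨u, ⟨a, ha, b, hb, hab⟩, w, hw, hux⟩
      obtain ⟨v, hv1, hv2⟩ := IJ_assoc_fwd (InterpW_to_IJ hab) (InterpW_to_IJ hux)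
      exact ⟨a, ha, v, ⟨b, hb, w, hw, IJ_to_InterpW hv1⟩, IJ_to_InterpW hv2⟩
    · rintro ⟨a, ha, v, ⟨b, hb, w, hw, hbw⟩, hvx⟩
      obtain ⟨t, ht1, ht2⟩ :=
        IJ_assoc_fwd (IJ_comm (InterpW_to_IJ hbw)) (IJ_comm (InterpW_to_IJ hvx))
      exact ⟨t, ⟨a, ha, b, hb, IJ_to_InterpW (IJ_comm ht1)⟩, w, hw,
        IJ_to_InterpW (IJ_comm ht2)⟩
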